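/- Under Assumptions 1-3, the stochastic collocation approximation $\tilde{y}(\xi) = \sum_{j=1}^{N_p} \tilde{c}_j \Psi_j(\xi)$ with $\tilde{c}_j = \mathbb{I}[y\,\Psi_j]$ satisfies the error bound $\|y - \tilde{y}\|_2 \le \delta + N_p(LT\epsilon + W\delta)$, where $T = \max_{j,l \le N_{2p}} \|\Psi_j \Psi_l\|_2$. -/

import Mathlib

open MeasureTheory

lemma int_mul {Ω : Type*} [MeasurableSpace Ω] {μ : Measure Ω} {f g : Ω → ℝ}
    (hf : AEStronglyMeasurable f μ) (hg : AEStronglyMeasurable g μ)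
    (hf2 : Integrable (fun x => f x ^ 2) μ) (hg2 : Integrable (fun x => g x ^ 2) μ) :
    Integrable (fun x => f x * g x) μ := by
  refine Integrable.mono' ((hf2.add hg2).div_const 2) (hf.mul hg) ?_
  filter_upwards with x
  have : |f x * g x| ≤ (f x ^ 2 + g x ^ 2) / 2 := by
    rw [abs_mul]
    nlinarith [sq_nonneg (|f x| - |g x|), sq_abs (f x), sq_abs (g x), abs_nonneg (f x), abs_nonneg (g x)]
  simpa [abs_mul] using this

lemma cs_int {Ω : Type*} [MeasurableSpace Ω] {μ : Measure Ω} {f g : Ω → ℝ}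
    (hf2 : Integrable (fun x => f x ^ 2) μ) (hg2 : Integrable (fun x => g x ^ 2) μ)
    (hfg : Integrable (fun x => f x * g x) μ) :
    |∫ x, f x * g x ∂μ| ≤ Real.sqrt (∫ x, f x ^ 2 ∂μ) * Real.sqrt (∫ x, g x ^ 2 ∂μ) := by
  set A := ∫ x, f x ^ 2 ∂μ
  set B := ∫ x, f x * g x ∂μ
  set C := ∫ x, g x ^ 2 ∂μ
  have hA : 0 ≤ A := integral_nonneg fun x => sq_nonneg _
  have hC : 0 ≤ C := integral_nonneg fun x => sq_nonneg _
  have key : discrim A (2 * B) C ≤ 0 := by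
    apply discrim_le_zero
    intro t
    have e1 : ∫ x, (t * f x + g x) ^ 2 ∂μ
        = ∫ x, ((t * t) * f x ^ 2 + (2 * t) * (f x * g x)) + g x ^ 2 ∂μ := by
      congr 1; funext x; ring
    have e2 : ∫ x, ((t * t) * f x ^ 2 + (2 * t) * (f x * g x)) + g x ^ 2 ∂μ
        = (∫ x, (t * t) * f x ^ 2 + (2 * t) * (f x * g x) ∂μ) + C :=
      integral_add ((hf2.const_mul (t*t)).add (hfg.const_mul (2*t))) hg2
    have e3 : ∫ x, (t * t) * f x ^ 2 + (2 * t) * (f x * g x) ∂μ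
        = (t*t) * A + (2*t) * B := by
      rw [integral_add (hf2.const_mul (t*t)) (hfg.const_mul (2*t)),
        integral_const_mul, integral_const_mul]
    have : A * (t * t) + 2 * B * t + C = ∫ x, (t * f x + g x) ^ 2 ∂μ := by
      rw [e1, e2, e3]; ring
    rw [this]
    exact integral_nonneg fun x => sq_nonneg _
  have hB2 : B ^ 2 ≤ A * C := by
    rw [discrim] at key; nlinarith
  calc |B| = Real.sqrt (B ^ 2) := by rw [Real.sqrt_sq_eq_abs]
    _ ≤ Real.sqrt (A * C) := Real.sqrt_le_sqrt hB2
    _ = Real.sqrt A * Real.sqrt C := Real.sqrt_mul hA C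

lemma cs_int_abs {Ω : Type*} [MeasurableSpace Ω] {μ : Measure Ω} {f g : Ω → ℝ}
    (hf2 : Integrable (fun x => f x ^ 2) μ) (hg2 : Integrable (fun x => g x ^ 2) μ)
    (hfg : Integrable (fun x => f x * g x) μ) :
    ∫ x, |f x * g x| ∂μ ≤ Real.sqrt (∫ x, f x ^ 2 ∂μ) * Real.sqrt (∫ x, g x ^ 2 ∂μ) := by
  have h2f : Integrable (fun x => |f x| ^ 2) μ := by simpa [sq_abs] using hf2
  have h2g : Integrable (fun x => |g x| ^ 2) μ := by simpa [sq_abs] using hg2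
  have h3 : Integrable (fun x => |f x| * |g x|) μ := by
    simpa [abs_mul] using hfg.abs
  have := cs_int h2f h2g h3
  have hnn : 0 ≤ ∫ x, |f x| * |g x| ∂μ := integral_nonneg fun x => by positivity
  rw [abs_of_nonneg hnn] at this
  simpa [abs_mul, sq_abs] using this

/-- Stochastic collocation error bound: under Assumptions 1–3,
`‖y - ỹ‖₂ ≤ δ + N_p (L T ε + W δ)` where `ỹ` has the numerically computed coefficients
and `T` bounds the `L²` norms of products of basis functions. -/
theorem stmt_5 {Ω : Type*} [MeasurableSpace Ω] (μ : Measure Ω) [IsProbabilityMeasure μ]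
    (n₁ n₂ : ℕ) (hn : n₁ ≤ n₂)
    (Ψ : Fin n₂ → Ω → ℝ)
    (horth : ∀ i j, ∫ x, Ψ i x * Ψ j x ∂μ = if i = j then (1 : ℝ) else 0)
    (hΨint : ∀ j, Integrable (Ψ j) μ)
    (hΨprod2 : ∀ i j, Integrable (fun x => (Ψ i x * Ψ j x) ^ 2) μ)
    (y : Ω → ℝ) (L δ ε W T : ℝ)
    (hymeas : AEStronglyMeasurable y μ)
    (hy2 : Integrable (fun x => (y x) ^ 2) μ)
    (hyΨ : ∀ j, Integrable (fun x => y x * Ψ j x) μ)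
    (hL : Real.sqrt (∫ x, (y x) ^ 2 ∂μ) ≤ L)
    (c : Fin n₂ → ℝ) (hc : ∀ j, c j = ∫ x, y x * Ψ j x ∂μ)
    (yp : Ω → ℝ)
    (hyp : yp = fun x => ∑ j : Fin n₁, c (Fin.castLE hn j) * Ψ (Fin.castLE hn j) x)
    (hδ : Real.sqrt (∫ x, (y x - yp x) ^ 2 ∂μ) ≤ δ)
    (hdiff2 : Integrable (fun x => (y x - yp x) ^ 2) μ)
    (M : ℕ) (ξ : Fin M → Ω) (w : Fin M → ℝ)
    (hW : ∀ f : Ω → ℝ, Integrable f μ →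
      |∑ k, w k * f (ξ k)| ≤ W * ∫ x, |f x| ∂μ)
    (hε : ∑ j : Fin n₂, |(∑ k, w k * Ψ j (ξ k)) - ∫ x, Ψ j x ∂μ| ≤ ε)
    (hT : ∀ j l : Fin n₂, Real.sqrt (∫ x, (Ψ j x * Ψ l x) ^ 2 ∂μ) ≤ T)
    (hspan : ∀ j l : Fin n₁, ∃ a : Fin n₂ → ℝ,
      ∀ x, Ψ (Fin.castLE hn j) x * Ψ (Fin.castLE hn l) x = ∑ m, a m * Ψ m x)
    (ctil : Fin n₁ → ℝ)
    (hctil : ∀ j, ctil j = ∑ k, w k * (y (ξ k) * Ψ (Fin.castLE hn j) (ξ k)))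
    (ytil : Ω → ℝ)
    (hytil : ytil = fun x => ∑ j : Fin n₁, ctil j * Ψ (Fin.castLE hn j) x) :
    Real.sqrt (∫ x, (y x - ytil x) ^ 2 ∂μ) ≤ δ + n₁ * (L * T * ε + W * δ) := by
  -- basic facts
  have hΨmeas : ∀ j, AEStronglyMeasurable (Ψ j) μ := fun j => (hΨint j).aestronglyMeasurable
  have hΨsq : ∀ j, Integrable (fun x => Ψ j x ^ 2) μ := by
    intro j
    refine Integrable.mono' ((integrable_const (1:ℝ)).add (hΨprod2 j j)) ?_ ?_
    · exact ((hΨmeas j).mul (hΨmeas j)).congr (by filter_upwards with x; simp [sq])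
    · filter_upwards with x
      have h0 : (0:ℝ) ≤ Ψ j x ^ 2 := sq_nonneg _
      have : Ψ j x ^ 2 ≤ 1 + (Ψ j x ^ 2) ^ 2 := by nlinarith
      simpa [abs_of_nonneg h0, mul_pow, ← sq] using this
  have hΨΨint : ∀ j l, Integrable (fun x => Ψ j x * Ψ l x) μ := fun j l =>
    int_mul (hΨmeas j) (hΨmeas l) (hΨsq j) (hΨsq l)
  have hΨnorm : ∀ j, ∫ x, Ψ j x ^ 2 ∂μ = 1 := by
    intro j
    have := horth j j
    simpa [sq] using this
  have hL0 : 0 ≤ L := le_trans (Real.sqrt_nonneg _) hL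
  have hδ0 : 0 ≤ δ := le_trans (Real.sqrt_nonneg _) hδ
  have hW0 : 0 ≤ W := by
    have h1 := hW (fun _ => (1:ℝ)) (integrable_const 1)
    simpa using le_trans (abs_nonneg _) h1
  -- yp basics
  have hypmeas : AEStronglyMeasurable yp μ := by
    rw [hyp]
    exact Finset.aestronglyMeasurable_fun_sum _ fun j _ => (hΨmeas _).const_mul _
  have hypsq : Integrable (fun x => yp x ^ 2) μ := by
    have : (fun x => yp x ^ 2) = fun x =>
        ∑ l : Fin n₁, ∑ m : Fin n₁, (c (Fin.castLE hn l) * c (Fin.castLE hn m)) *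
          (Ψ (Fin.castLE hn l) x * Ψ (Fin.castLE hn m) x) := by
      funext x
      rw [hyp, sq, Finset.sum_mul_sum]
      refine Finset.sum_congr rfl fun l _ => Finset.sum_congr rfl fun m _ => by ring
    rw [this]
    exact integrable_finset_sum _ fun l _ => integrable_finset_sum _ fun m _ =>
      (hΨΨint _ _).const_mul _
  have hyyp : Integrable (fun x => y x * yp x) μ :=
    int_mul hymeas hypmeas hy2 hypsq
  have hypnormsq : ∫ x, yp x ^ 2 ∂μ = ∑ l : Fin n₁, c (Fin.castLE hn l) ^ 2 := by
    have e : (fun x => yp x ^ 2) = fun x =>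
        ∑ l : Fin n₁, ∑ m : Fin n₁, (c (Fin.castLE hn l) * c (Fin.castLE hn m)) *
          (Ψ (Fin.castLE hn l) x * Ψ (Fin.castLE hn m) x) := by
      funext x
      rw [hyp, sq, Finset.sum_mul_sum]
      refine Finset.sum_congr rfl fun l _ => Finset.sum_congr rfl fun m _ => by ring
    rw [e, integral_finset_sum _ fun l _ => integrable_finset_sum _ fun m _ =>
      (hΨΨint _ _).const_mul _]
    refine Finset.sum_congr rfl fun l _ => ?_
    rw [integral_finset_sum _ fun m _ => (hΨΨint _ _).const_mul _]
    have : ∀ m : Fin n₁, ∫ x, (c (Fin.castLE hn l) * c (Fin.castLE hn m)) *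
        (Ψ (Fin.castLE hn l) x * Ψ (Fin.castLE hn m) x) ∂μ
        = (c (Fin.castLE hn l) * c (Fin.castLE hn m)) * (if l = m then (1:ℝ) else 0) := by
      intro m
      rw [integral_const_mul, horth]
      simp [Fin.castLE_inj]
    simp only [this, mul_ite, mul_one, mul_zero]
    simp [sq]
  have hyypint : ∫ x, y x * yp x ∂μ = ∑ l : Fin n₁, c (Fin.castLE hn l) ^ 2 := by
    have e : (fun x => y x * yp x) = fun x =>
        ∑ l : Fin n₁, c (Fin.castLE hn l) * (y x * Ψ (Fin.castLE hn l) x) := by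
      funext x
      rw [hyp, Finset.mul_sum]
      exact Finset.sum_congr rfl fun l _ => by ring
    rw [e, integral_finset_sum _ fun l _ => (hyΨ _).const_mul _]
    refine Finset.sum_congr rfl fun l _ => ?_
    rw [integral_const_mul, ← hc, sq]
  have hypL : Real.sqrt (∫ x, yp x ^ 2 ∂μ) ≤ L := by
    set S := Real.sqrt (∫ x, yp x ^ 2 ∂μ) with hS
    have hS0 : 0 ≤ S := Real.sqrt_nonneg _
    have hSsq : S ^ 2 = ∫ x, yp x ^ 2 ∂μ :=
      Real.sq_sqrt (integral_nonneg fun x => sq_nonneg _)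
    have h1 : ∫ x, yp x ^ 2 ∂μ ≤ L * S := by
      rw [hypnormsq, ← hyypint]
      calc ∫ x, y x * yp x ∂μ ≤ |∫ x, y x * yp x ∂μ| := le_abs_self _
        _ ≤ Real.sqrt (∫ x, (y x) ^ 2 ∂μ) * S := cs_int hy2 hypsq hyyp
        _ ≤ L * S := mul_le_mul_of_nonneg_right hL hS0
    nlinarith
  -- the coefficient errors
  set d : Fin n₁ → ℝ := fun j => ctil j - c (Fin.castLE hn j) with hd
  have hdbd : ∀ j : Fin n₁, |d j| ≤ L * T * ε + W * δ := by
    intro j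
    have hT0 : 0 ≤ T := le_trans (Real.sqrt_nonneg _) (hT (Fin.castLE hn j) (Fin.castLE hn j))
    set Pj : Ω → ℝ := Ψ (Fin.castLE hn j) with hPj
    -- coefficients of yp * Pj in the basis
    set b : Fin n₂ → ℝ := fun m =>
      ∑ l : Fin n₁, c (Fin.castLE hn l) * (hspan l j).choose m with hb
    have hbrep : ∀ x, yp x * Pj x = ∑ m : Fin n₂, b m * Ψ m x := by
      intro x
      have e1 : yp x * Pj x = ∑ l : Fin n₁, c (Fin.castLE hn l) *
          (Ψ (Fin.castLE hn l) x * Pj x) := by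
        rw [hyp, Finset.sum_mul]
        exact Finset.sum_congr rfl fun l _ => by ring
      rw [e1]
      have e2 : ∀ l : Fin n₁, c (Fin.castLE hn l) * (Ψ (Fin.castLE hn l) x * Pj x)
          = ∑ m : Fin n₂, c (Fin.castLE hn l) * ((hspan l j).choose m * Ψ m x) := by
        intro l
        rw [(hspan l j).choose_spec x, Finset.mul_sum]
      simp only [e2]
      rw [Finset.sum_comm]
      exact Finset.sum_congr rfl fun m _ => by
        rw [Finset.sum_mul]; exact Finset.sum_congr rfl fun l _ => by ring
    have hbeq : ∀ m, b m = ∫ x, yp x * Pj x * Ψ m x ∂μ := by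
      intro m
      have e : (fun x => yp x * Pj x * Ψ m x) = fun x =>
          ∑ k : Fin n₂, b k * (Ψ k x * Ψ m x) := by
        funext x
        rw [hbrep x, Finset.sum_mul]
        exact Finset.sum_congr rfl fun k _ => by ring
      rw [e, integral_finset_sum _ fun k _ => (hΨΨint _ _).const_mul _]
      have : ∀ k : Fin n₂, b k * ∫ x, Ψ k x * Ψ m x ∂μ = b k * (if k = m then (1:ℝ) else 0) := by
        intro k; rw [horth]
      simp only [integral_const_mul, this, mul_ite, mul_one, mul_zero]
      simp
    have hbbd : ∀ m, |b m| ≤ L * T := by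
      intro m
      have e : b m = ∫ x, yp x * (Pj x * Ψ m x) ∂μ := by
        rw [hbeq m]; congr 1; funext x; ring
      rw [e]
      have hint : Integrable (fun x => yp x * (Pj x * Ψ m x)) μ :=
        int_mul hypmeas ((hΨmeas _).mul (hΨmeas m)) hypsq (hΨprod2 _ m)
      calc |∫ x, yp x * (Pj x * Ψ m x) ∂μ|
          ≤ Real.sqrt (∫ x, yp x ^ 2 ∂μ) * Real.sqrt (∫ x, (Pj x * Ψ m x) ^ 2 ∂μ) :=
            cs_int hypsq (hΨprod2 _ m) hint
        _ ≤ L * T := mul_le_mul hypL (hT _ m) (Real.sqrt_nonneg _) hL0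
    -- split the error
    have hypPj : ∫ x, yp x * Pj x ∂μ = c (Fin.castLE hn j) := by
      have e : (fun x => yp x * Pj x) = fun x =>
          ∑ l : Fin n₁, c (Fin.castLE hn l) * (Ψ (Fin.castLE hn l) x * Pj x) := by
        funext x
        rw [hyp, Finset.sum_mul]
        exact Finset.sum_congr rfl fun l _ => by ring
      rw [e, integral_finset_sum _ fun l _ => (hΨΨint _ _).const_mul _]
      have : ∀ l : Fin n₁, c (Fin.castLE hn l) * ∫ x, Ψ (Fin.castLE hn l) x * Pj x ∂μ
          = c (Fin.castLE hn l) * (if l = j then (1:ℝ) else 0) := by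
        intro l; rw [hPj, horth]; simp [Fin.castLE_inj]
      simp only [← hPj, integral_const_mul, this, mul_ite, mul_one, mul_zero]
      simp
    set E1 : ℝ := ∑ k, w k * ((y (ξ k) - yp (ξ k)) * Pj (ξ k)) with hE1
    set E2 : ℝ := (∑ k, w k * (yp (ξ k) * Pj (ξ k))) - ∫ x, yp x * Pj x ∂μ with hE2
    have hsplit : d j = E1 + E2 := by
      show ctil j - c (Fin.castLE hn j) = E1 + E2
      rw [hctil j, hE1, hE2, hypPj]
      have : ∀ k, w k * (y (ξ k) * Pj (ξ k)) =
          w k * ((y (ξ k) - yp (ξ k)) * Pj (ξ k)) + w k * (yp (ξ k) * Pj (ξ k)) := by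
        intro k; ring
      simp only [← hPj, this, Finset.sum_add_distrib]
      ring
    have hE1bd : |E1| ≤ W * δ := by
      have hfint : Integrable (fun x => (y x - yp x) * Pj x) μ :=
        int_mul (hymeas.sub hypmeas) (hΨmeas _) hdiff2 (hΨsq _)
      have h1 := hW (fun x => (y x - yp x) * Pj x) hfint
      have h2 : ∫ x, |(y x - yp x) * Pj x| ∂μ ≤ δ := by
        calc ∫ x, |(y x - yp x) * Pj x| ∂μ
            ≤ Real.sqrt (∫ x, (y x - yp x) ^ 2 ∂μ) * Real.sqrt (∫ x, Pj x ^ 2 ∂μ) :=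
              cs_int_abs hdiff2 (hΨsq _) hfint
          _ = Real.sqrt (∫ x, (y x - yp x) ^ 2 ∂μ) := by rw [hPj, hΨnorm]; simp
          _ ≤ δ := hδ
      exact le_trans h1 (mul_le_mul_of_nonneg_left h2 hW0)
    have hE2bd : |E2| ≤ L * T * ε := by
      have eI : (∑ k, w k * (yp (ξ k) * Pj (ξ k)))
          = ∑ m : Fin n₂, b m * ∑ k, w k * Ψ m (ξ k) := by
        have : ∀ k, w k * (yp (ξ k) * Pj (ξ k)) = ∑ m : Fin n₂, b m * (w k * Ψ m (ξ k)) := by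
          intro k
          rw [hbrep (ξ k), Finset.mul_sum]
          exact Finset.sum_congr rfl fun m _ => by ring
        simp only [this]
        rw [Finset.sum_comm]
        exact Finset.sum_congr rfl fun m _ => by rw [Finset.mul_sum]
      have eInt : ∫ x, yp x * Pj x ∂μ = ∑ m : Fin n₂, b m * ∫ x, Ψ m x ∂μ := by
        have e : (fun x => yp x * Pj x) = fun x => ∑ m : Fin n₂, b m * Ψ m x := funext hbrep
        rw [e, integral_finset_sum _ fun m _ => (hΨint m).const_mul _]
        simp only [integral_const_mul]
      have eE2 : E2 = ∑ m : Fin n₂, b m * ((∑ k, w k * Ψ m (ξ k)) - ∫ x, Ψ m x ∂μ) := by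
        rw [hE2, eI, eInt, ← Finset.sum_sub_distrib]
        exact Finset.sum_congr rfl fun m _ => by ring
      rw [eE2]
      calc |∑ m : Fin n₂, b m * ((∑ k, w k * Ψ m (ξ k)) - ∫ x, Ψ m x ∂μ)|
          ≤ ∑ m : Fin n₂, |b m * ((∑ k, w k * Ψ m (ξ k)) - ∫ x, Ψ m x ∂μ)| :=
            Finset.abs_sum_le_sum_abs _ _
        _ ≤ ∑ m : Fin n₂, (L * T) * |(∑ k, w k * Ψ m (ξ k)) - ∫ x, Ψ m x ∂μ| := by
            refine Finset.sum_le_sum fun m _ => ?_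
            rw [abs_mul]
            exact mul_le_mul_of_nonneg_right (hbbd m) (abs_nonneg _)
        _ = (L * T) * ∑ m : Fin n₂, |(∑ k, w k * Ψ m (ξ k)) - ∫ x, Ψ m x ∂μ| := by
            rw [Finset.mul_sum]
        _ ≤ L * T * ε := mul_le_mul_of_nonneg_left hε (mul_nonneg hL0 hT0)
    calc |d j| = |E1 + E2| := by rw [hsplit]
      _ ≤ |E1| + |E2| := abs_add_le _ _
      _ ≤ W * δ + L * T * ε := add_le_add hE1bd hE2bd
      _ = L * T * ε + W * δ := by ring
  -- the L² norm of yp - ytil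
  have hgrep : ∀ x, yp x - ytil x = ∑ l : Fin n₁, (-(d l)) * Ψ (Fin.castLE hn l) x := by
    intro x
    rw [hyp, hytil, ← Finset.sum_sub_distrib]
    exact Finset.sum_congr rfl fun l _ => by rw [hd]; ring
  have hgsqint : Integrable (fun x => (yp x - ytil x) ^ 2) μ := by
    have e : (fun x => (yp x - ytil x) ^ 2) = fun x =>
        ∑ l : Fin n₁, ∑ m : Fin n₁, ((-(d l)) * (-(d m))) *
          (Ψ (Fin.castLE hn l) x * Ψ (Fin.castLE hn m) x) := by
      funext x
      rw [hgrep x, sq, Finset.sum_mul_sum]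
      exact Finset.sum_congr rfl fun l _ => Finset.sum_congr rfl fun m _ => by ring
    rw [e]
    exact integrable_finset_sum _ fun l _ => integrable_finset_sum _ fun m _ =>
      (hΨΨint _ _).const_mul _
  have hgnorm : ∫ x, (yp x - ytil x) ^ 2 ∂μ = ∑ l : Fin n₁, d l ^ 2 := by
    have e : (fun x => (yp x - ytil x) ^ 2) = fun x =>
        ∑ l : Fin n₁, ∑ m : Fin n₁, ((-(d l)) * (-(d m))) *
          (Ψ (Fin.castLE hn l) x * Ψ (Fin.castLE hn m) x) := by
      funext x
      rw [hgrep x, sq, Finset.sum_mul_sum]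
      exact Finset.sum_congr rfl fun l _ => Finset.sum_congr rfl fun m _ => by ring
    rw [e, integral_finset_sum _ fun l _ => integrable_finset_sum _ fun m _ =>
      (hΨΨint _ _).const_mul _]
    refine Finset.sum_congr rfl fun l _ => ?_
    rw [integral_finset_sum _ fun m _ => (hΨΨint _ _).const_mul _]
    have : ∀ m : Fin n₁, ∫ x, ((-(d l)) * (-(d m))) *
        (Ψ (Fin.castLE hn l) x * Ψ (Fin.castLE hn m) x) ∂μ
        = ((-(d l)) * (-(d m))) * (if l = m then (1:ℝ) else 0) := by
      intro m
      rw [integral_const_mul, horth]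
      simp [Fin.castLE_inj]
    simp only [this, mul_ite, mul_one, mul_zero]
    simp [sq]
  have hgbd : Real.sqrt (∫ x, (yp x - ytil x) ^ 2 ∂μ) ≤ n₁ * (L * T * ε + W * δ) := by
    rw [hgnorm]
    have h1 : ∑ l : Fin n₁, d l ^ 2 ≤ (∑ l : Fin n₁, |d l|) ^ 2 := by
      have := Finset.sum_sq_le_sq_sum_of_nonneg (s := Finset.univ)
        (f := fun l : Fin n₁ => |d l|) (fun l _ => abs_nonneg _)
      simpa [sq_abs] using this
    calc Real.sqrt (∑ l : Fin n₁, d l ^ 2) ≤ Real.sqrt ((∑ l : Fin n₁, |d l|) ^ 2) :=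
          Real.sqrt_le_sqrt h1
      _ = ∑ l : Fin n₁, |d l| := Real.sqrt_sq (Finset.sum_nonneg fun l _ => abs_nonneg _)
      _ ≤ ∑ _l : Fin n₁, (L * T * ε + W * δ) := Finset.sum_le_sum fun l _ => hdbd l
      _ = n₁ * (L * T * ε + W * δ) := by
          rw [Finset.sum_const, Finset.card_univ, Fintype.card_fin, nsmul_eq_mul]
  -- triangle inequality
  have hytilmeas : AEStronglyMeasurable ytil μ := by
    rw [hytil]
    exact Finset.aestronglyMeasurable_fun_sum _ fun j _ => (hΨmeas _).const_mul _
  have hfg : Integrable (fun x => (y x - yp x) * (yp x - ytil x)) μ :=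
    int_mul (hymeas.sub hypmeas) (hypmeas.sub hytilmeas) hdiff2 hgsqint
  set A := Real.sqrt (∫ x, (y x - yp x) ^ 2 ∂μ) with hA
  set B := Real.sqrt (∫ x, (yp x - ytil x) ^ 2 ∂μ) with hB
  have hA0 : 0 ≤ A := Real.sqrt_nonneg _
  have hB0 : 0 ≤ B := Real.sqrt_nonneg _
  have hAsq : A ^ 2 = ∫ x, (y x - yp x) ^ 2 ∂μ :=
    Real.sq_sqrt (integral_nonneg fun x => sq_nonneg _)
  have hBsq : B ^ 2 = ∫ x, (yp x - ytil x) ^ 2 ∂μ :=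
    Real.sq_sqrt (integral_nonneg fun x => sq_nonneg _)
  have hexp : ∫ x, (y x - ytil x) ^ 2 ∂μ
      = (∫ x, (y x - yp x) ^ 2 ∂μ) + 2 * (∫ x, (y x - yp x) * (yp x - ytil x) ∂μ)
        + ∫ x, (yp x - ytil x) ^ 2 ∂μ := by
    have e : (fun x => (y x - ytil x) ^ 2) = fun x =>
        ((y x - yp x) ^ 2 + 2 * ((y x - yp x) * (yp x - ytil x))) + (yp x - ytil x) ^ 2 := by
      funext x; ring
    have i1 : ∫ x, ((y x - yp x) ^ 2 + 2 * ((y x - yp x) * (yp x - ytil x))) + (yp x - ytil x) ^ 2 ∂μ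
        = (∫ x, (y x - yp x) ^ 2 + 2 * ((y x - yp x) * (yp x - ytil x)) ∂μ)
          + ∫ x, (yp x - ytil x) ^ 2 ∂μ :=
      integral_add (hdiff2.add (hfg.const_mul 2)) hgsqint
    have i2 : ∫ x, (y x - yp x) ^ 2 + 2 * ((y x - yp x) * (yp x - ytil x)) ∂μ
        = (∫ x, (y x - yp x) ^ 2 ∂μ) + ∫ x, 2 * ((y x - yp x) * (yp x - ytil x)) ∂μ :=
      integral_add hdiff2 (hfg.const_mul 2)
    rw [e, i1, i2, integral_const_mul]
  have hcross : ∫ x, (y x - yp x) * (yp x - ytil x) ∂μ ≤ A * B :=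
    le_trans (le_abs_self _) (cs_int hdiff2 hgsqint hfg)
  have hmain : ∫ x, (y x - ytil x) ^ 2 ∂μ ≤ (A + B) ^ 2 := by
    rw [hexp, ← hAsq, ← hBsq]
    nlinarith [hcross]
  calc Real.sqrt (∫ x, (y x - ytil x) ^ 2 ∂μ) ≤ Real.sqrt ((A + B) ^ 2) :=
        Real.sqrt_le_sqrt hmain
    _ = A + B := Real.sqrt_sq (by linarith)
    _ ≤ δ + n₁ * (L * T * ε + W * δ) := add_le_add hδ hgbd
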